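/- arXiv:1603.05738 — 2 statements merged into one kernel-verified Lean document; each statement's English description precedes it below -/
import Mathlib

section
/- (Corollary 1) Suppose the tolerance sequence is η_k = σ/k² for all k ≥ 1 with σ > 0. Let x* be an optimal solution of the primal problem and assume strong duality d(λ*) = F(x*). Then there exist constants C₁, C₂, C₃ > 0 (independent of k) such that for all k ≥ 1: δ_k ≤ C₁/k, ‖Ax^{k+1} − b‖² ≤ C₂/k, and |F(x^{k+1}) − F(x*)| ≤ C₃/√k. -/
open RealInnerProductSpace Filter

set_option maxHeartbeats 2000000

private lemma grad_ineq {n : ℕ} {f : EuclideanSpace ℝ (Fin n) → ℝ}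
    {f' : EuclideanSpace ℝ (Fin n) → EuclideanSpace ℝ (Fin n)}
    (hf : ConvexOn ℝ Set.univ f) (hf' : ∀ z, HasGradientAt f (f' z) z)
    (u v : EuclideanSpace ℝ (Fin n)) :
    f u + ⟪f' u, v - u⟫ ≤ f v := by
  set c : ℝ → EuclideanSpace ℝ (Fin n) := fun t => t • (v - u) + u with hc
  have hcd : HasDerivAt c (v - u) 0 := by
    have h := ((hasDerivAt_id (0:ℝ)).smul_const (v - u)).add_const u
    rw [one_smul] at h; exact h
  have hc0 : c 0 = u := by simp [hc]
  have hFd : HasFDerivAt f (InnerProductSpace.toDual ℝ _ (f' u)) (c 0) := by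
    rw [hc0]; exact hasGradientAt_iff_hasFDerivAt.mp (hf' u)
  have hφd : HasDerivAt (f ∘ c) (⟪f' u, v - u⟫) 0 := by
    have h := hFd.comp_hasDerivAt 0 hcd
    rw [InnerProductSpace.toDual_apply_apply] at h
    exact h
  have hφconv : ConvexOn ℝ Set.univ (f ∘ c) := by
    have h := hf.comp_affineMap (AffineMap.lineMap u v : ℝ →ᵃ[ℝ] _)
    have heq : (f ∘ (AffineMap.lineMap u v : ℝ →ᵃ[ℝ] _)) = f ∘ c := by
      funext t
      show f (AffineMap.lineMap u v t) = f (t • (v - u) + u)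
      congr 1
    rw [heq] at h
    simpa using h
  have hs := hφconv.le_slope_of_hasDerivAt (Set.mem_univ (0:ℝ)) (Set.mem_univ (1:ℝ)) one_pos hφd
  rw [slope_def_field] at hs
  have h1 : (f ∘ c) 1 = f v := by
    show f ((1:ℝ) • (v - u) + u) = f v
    congr 1
    module
  have h0 : (f ∘ c) 0 = f u := congrArg f hc0
  rw [h1, h0] at hs
  rw [sub_zero, div_one] at hs
  linarith

private lemma tail_sum {σ : ℝ} (hσ : 0 < σ) {m : ℕ} (hm : 1 ≤ m) (k : ℕ) :
    ∑ j ∈ Finset.Icc m k, σ / (j:ℝ)^2 ≤ 2*σ/(m:ℝ) := by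
  have hmr : (1:ℝ) ≤ (m:ℝ) := by exact_mod_cast hm
  have hmp : (0:ℝ) < (m:ℝ) := by linarith
  rcases lt_or_ge k m with h | h
  · rw [Finset.Icc_eq_empty (by omega)]
    simp only [Finset.sum_empty]
    positivity
  · have key : ∀ K, m ≤ K → ∑ j ∈ Finset.Icc m K, σ / (j:ℝ)^2 ≤ 2*σ/(m:ℝ) - σ/(K:ℝ) := by
      intro K hK
      induction K, hK using Nat.le_induction with
      | base =>
        rw [Finset.Icc_self, Finset.sum_singleton]
        have h1 : σ/(m:ℝ)^2 ≤ σ/(m:ℝ) := by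
          apply div_le_div_of_nonneg_left hσ.le hmp
          nlinarith
        have h2 : 2*σ/(m:ℝ) - σ/(m:ℝ) = σ/(m:ℝ) := by ring
        linarith
      | succ K hK ih =>
        rw [Finset.sum_Icc_succ_top (by omega)]
        have hKr : (1:ℝ) ≤ (K:ℝ) := by exact_mod_cast hK.trans' hm
        have hKp : (0:ℝ) < (K:ℝ) := by linarith
        push_cast
        have h1 : σ/((K:ℝ)+1)^2 ≤ σ/(K:ℝ) - σ/((K:ℝ)+1) := by
          have e : σ/(K:ℝ) - σ/((K:ℝ)+1) = σ/((K:ℝ)*((K:ℝ)+1)) := by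
            field_simp
            ring
          rw [e]
          apply div_le_div_of_nonneg_left hσ.le (by positivity)
          nlinarith
        push_cast at ih
        linarith
    have hKr : (0:ℝ) < (k:ℝ) := by
      have : 1 ≤ k := hm.trans h
      exact_mod_cast Nat.pos_of_ne_zero (by omega)
    have := key k h
    have : 0 ≤ σ/(k:ℝ) := by positivity
    linarith [key k h]

/-- **Corollary 1.**
Suppose `η_k = σ/k²` for all `k ≥ 1` with `σ > 0`. Let `x*` be an optimal primal
solution and assume strong duality `d(λ*) = F(x*)`. Then there exist constants
`C₁, C₂, C₃ > 0` such that for all `k ≥ 1`: `δ_k ≤ C₁/k`,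
`‖Ax^{k+1} − b‖² ≤ C₂/k`, and `|F(x^{k+1}) − F(x*)| ≤ C₃/√k`. -/
theorem ial_corollary_rates
    {n m : ℕ}
    (A : EuclideanSpace ℝ (Fin n) →L[ℝ] EuclideanSpace ℝ (Fin m))
    (b : EuclideanSpace ℝ (Fin m))
    (f g : EuclideanSpace ℝ (Fin n) → ℝ)
    (f' : EuclideanSpace ℝ (Fin n) → EuclideanSpace ℝ (Fin n))
    (hf : ConvexOn ℝ Set.univ f)
    (hf' : ∀ x, HasGradientAt f (f' x) x)
    (hg : ConvexOn ℝ Set.univ g)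
    (β : ℝ) (hβ : 0 < β)
    (L : EuclideanSpace ℝ (Fin n) → EuclideanSpace ℝ (Fin m) → ℝ)
    (hL : ∀ x lam, L x lam
        = f x + ⟪lam, A x - b⟫ + β / 2 * ‖A x - b‖ ^ 2 + g x)
    (d : EuclideanSpace ℝ (Fin m) → ℝ)
    (hd : ∀ lam, IsLeast (Set.range fun x => L x lam) (d lam))
    (x : ℕ → EuclideanSpace ℝ (Fin n))
    (lam : ℕ → EuclideanSpace ℝ (Fin m))
    (σ : ℝ) (hσ : 0 < σ)
    (η : ℕ → ℝ)
    (hη : ∀ k, 1 ≤ k → η k = σ / (k : ℝ) ^ 2)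
    (happrox : ∀ k, 1 ≤ k → ∀ y,
        ⟪f' (x (k + 1)) + A.adjoint (lam k + β • (A (x (k + 1)) - b)), x (k + 1) - y⟫
          + g (x (k + 1)) - g y ≤ η k)
    (hlam : ∀ k, 1 ≤ k → lam (k + 1) = lam k + β • (A (x (k + 1)) - b))
    (lamstar : EuclideanSpace ℝ (Fin m))
    (hstar : ∀ μ, d μ ≤ d lamstar)
    (δ : ℕ → ℝ)
    (hδ : ∀ k, δ k = d lamstar - d (lam k))
    (F : EuclideanSpace ℝ (Fin n) → ℝ)
    (hF : ∀ y, F y = f y + g y)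
    (xstar : EuclideanSpace ℝ (Fin n))
    (hfeas : A xstar = b)
    (hopt : ∀ y, A y = b → F xstar ≤ F y)
    (hsd : d lamstar = F xstar) :
    ∃ C₁ C₂ C₃ : ℝ, 0 < C₁ ∧ 0 < C₂ ∧ 0 < C₃ ∧
      ∀ k, 1 ≤ k →
        δ k ≤ C₁ / k
          ∧ ‖A (x (k + 1)) - b‖ ^ 2 ≤ C₂ / k
          ∧ |F (x (k + 1)) - F xstar| ≤ C₃ / Real.sqrt k := by
  classical
  -- basic facts
  have hdle : ∀ μ y, d μ ≤ L y μ := fun μ y => (hd μ).2 ⟨y, rfl⟩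
  have hδnn : ∀ k, 0 ≤ δ k := fun k => by rw [hδ]; linarith [hstar (lam k)]
  have hηnn : ∀ k, 1 ≤ k → 0 ≤ η k := by
    intro k hk; rw [hη k hk]
    have : (0:ℝ) < (k:ℝ) := by exact_mod_cast Nat.pos_of_ne_zero (by omega)
    positivity
  -- the approximate optimality rewritten
  have hsub : ∀ k, 1 ≤ k → ∀ y, F (x (k+1)) + ⟪lam (k+1), A (x (k+1)) - b⟫
      ≤ f y + g y + ⟪lam (k+1), A y - b⟫ + η k := by
    intro k hk y
    have h1 := happrox k hk y
    rw [← hlam k hk] at h1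
    have h2 : ⟪f' (x (k+1)) + A.adjoint (lam (k+1)), x (k+1) - y⟫
        = ⟪f' (x (k+1)), x (k+1) - y⟫ + ⟪lam (k+1), A (x (k+1)) - A y⟫ := by
      rw [inner_add_left, ContinuousLinearMap.adjoint_inner_left, map_sub]
    rw [h2] at h1
    have h3 : ⟪lam (k+1), A (x (k+1)) - A y⟫
        = ⟪lam (k+1), A (x (k+1)) - b⟫ - ⟪lam (k+1), A y - b⟫ := by
      rw [← inner_sub_right]
      congr 1
      abel
    have h4 := grad_ineq hf hf' (x (k+1)) y
    have h5 : ⟪f' (x (k+1)), x (k+1) - y⟫ = -⟪f' (x (k+1)), y - x (k+1)⟫ := by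
      rw [← inner_neg_right]
      congr 1
      abel
    rw [hF]
    rw [h3, h5] at h1
    linarith
  -- lower bound on the new dual value
  have hlow : ∀ k, 1 ≤ k → F (x (k+1)) + ⟪lam (k+1), A (x (k+1)) - b⟫ - η k
      ≤ d (lam (k+1)) := by
    intro k hk
    obtain ⟨y₀, hy₀⟩ := (hd (lam (k+1))).1
    have hy₀' : L y₀ (lam (k+1)) = d (lam (k+1)) := hy₀
    have h := hsub k hk y₀
    have hL0 := hL y₀ (lam (k+1))
    have hnn : 0 ≤ β/2 * ‖A y₀ - b‖^2 := by positivity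
    linarith
  -- upper bound on any dual value
  have hup : ∀ k (μ : EuclideanSpace ℝ (Fin m)),
      d μ ≤ F (x (k+1)) + ⟪μ, A (x (k+1)) - b⟫ + β/2 * ‖A (x (k+1)) - b‖^2 := by
    intro k μ
    have h := hdle μ (x (k+1))
    rw [hL] at h
    rw [hF]
    linarith
  -- key per-step inequality
  have hkey : ∀ k, 1 ≤ k → ∀ μ, d μ ≤ d (lam (k+1)) + η k
      + ⟪μ - lam (k+1), A (x (k+1)) - b⟫ + β/2 * ‖A (x (k+1)) - b‖^2 := by
    intro k hk μ
    have h1 := hup k μ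
    have h2 := hlow k hk
    have h3 : ⟪μ - lam (k+1), A (x (k+1)) - b⟫
        = ⟪μ, A (x (k+1)) - b⟫ - ⟪lam (k+1), A (x (k+1)) - b⟫ := inner_sub_left _ _ _
    linarith
  -- telescoping inequality: δ(k+1) ≤ η k + (a k - a (k+1))/(2β)
  set a : ℕ → ℝ := fun k => ‖lamstar - lam k‖^2 with ha
  have hann : ∀ k, 0 ≤ a k := fun k => by rw [ha]; positivity
  have htel : ∀ k, 1 ≤ k → δ (k+1) ≤ η k + (a k - a (k+1))/(2*β) := by
    intro k hk
    have h := hkey k hk lamstar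
    have e1 : lamstar - lam k = (lamstar - lam (k+1)) + β • (A (x (k+1)) - b) := by
      rw [hlam k hk]
      module
    have hid : a k = a (k+1) + 2*β*⟪lamstar - lam (k+1), A (x (k+1)) - b⟫
        + β^2 * ‖A (x (k+1)) - b‖^2 := by
      simp only [ha]
      rw [e1, norm_add_sq_real, real_inner_smul_right, norm_smul]
      rw [Real.norm_eq_abs, mul_pow, sq_abs]
      ring
    have hdiv : (a k - a (k+1))/(2*β)
        = ⟪lamstar - lam (k+1), A (x (k+1)) - b⟫ + β/2 * ‖A (x (k+1)) - b‖^2 := by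
      rw [hid]
      field_simp
      ring
    rw [hdiv]
    have hδ1 := hδ (k+1)
    linarith
  -- descent inequality
  have hδrec : ∀ k, 1 ≤ k → δ (k+1) + β/2 * ‖A (x (k+1)) - b‖^2 ≤ δ k + η k := by
    intro k hk
    have h := hkey k hk (lam k)
    have e : lam k - lam (k+1) = -(β • (A (x (k+1)) - b)) := by
      rw [hlam k hk]
      module
    rw [e, inner_neg_left, real_inner_smul_left, real_inner_self_eq_norm_sq] at h
    have hδ1 := hδ (k+1)
    have hδ2 := hδ k
    linarith
  have hmono : ∀ k, 1 ≤ k → δ (k+1) ≤ δ k + η k := by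
    intro k hk
    have := hδrec k hk
    have hnn : 0 ≤ β/2 * ‖A (x (k+1)) - b‖^2 := by positivity
    linarith
  -- step bound for a
  have hastep : ∀ k, 1 ≤ k → a (k+1) ≤ a k + 2*β*η k := by
    intro k hk
    have h := htel k hk
    have h0 := hδnn (k+1)
    have h2 : 0 ≤ η k + (a k - a (k+1))/(2*β) := le_trans h0 h
    have h3 : 0 ≤ (η k + (a k - a (k+1))/(2*β)) * (2*β) := mul_nonneg h2 (by positivity)
    have h4 : (η k + (a k - a (k+1))/(2*β)) * (2*β) = 2*β*η k + (a k - a (k+1)) := by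
      field_simp
    linarith
  -- boundedness of a
  have habound : ∀ k, 1 ≤ k → a k ≤ a 1 + 2*β*σ*(2 - 2/(k:ℝ)) := by
    intro k hk
    induction k, hk using Nat.le_induction with
    | base => norm_num
    | succ k hk ih =>
      have hkr : (1:ℝ) ≤ (k:ℝ) := by exact_mod_cast hk
      have hkp : (0:ℝ) < (k:ℝ) := by linarith
      have h1 := hastep k hk
      rw [hη k hk] at h1
      push_cast
      have h2 : σ/(k:ℝ)^2 ≤ σ * (2/(k:ℝ) - 2/((k:ℝ)+1)) := by
        have e : (2:ℝ)/(k:ℝ) - 2/((k:ℝ)+1) = 2/((k:ℝ)*((k:ℝ)+1)) := by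
          field_simp
          ring
        have e2 : σ * (2/((k:ℝ)*((k:ℝ)+1))) = (2*σ)/((k:ℝ)*((k:ℝ)+1)) := by ring
        rw [e, e2, div_le_div_iff₀ (by positivity) (by positivity)]
        nlinarith [mul_nonneg hσ.le (by nlinarith : (0:ℝ) ≤ (k:ℝ)^2 - (k:ℝ))]
      nlinarith [h1, ih, h2]
  have hR2' : ∀ k, 1 ≤ k → a k ≤ a 1 + 4*β*σ := by
    intro k hk
    have h := habound k hk
    have hkr : (1:ℝ) ≤ (k:ℝ) := by exact_mod_cast hk
    have : 0 < 2/(k:ℝ) := by positivity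
    nlinarith [mul_pos hβ hσ]
  -- sum of η over an interval
  have hηIcc : ∀ m₀ k, 1 ≤ m₀ → ∑ j ∈ Finset.Icc m₀ k, η j ≤ 2*σ/(m₀:ℝ) := by
    intro m₀ k hm
    have he : ∑ j ∈ Finset.Icc m₀ k, η j = ∑ j ∈ Finset.Icc m₀ k, σ/(j:ℝ)^2 :=
      Finset.sum_congr rfl (fun j hj => hη j (by
        have := (Finset.mem_Icc.mp hj).1; omega))
    rw [he]
    exact tail_sum hσ hm k
  -- partial sums of δ are bounded
  have hsum : ∀ m₀, 1 ≤ m₀ → ∀ k, m₀ ≤ k →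
      ∑ j ∈ Finset.Icc m₀ k, δ (j+1)
        ≤ (∑ j ∈ Finset.Icc m₀ k, η j) + (a m₀ - a (k+1))/(2*β) := by
    intro m₀ hm k hmk
    induction k, hmk using Nat.le_induction with
    | base =>
      rw [Finset.Icc_self, Finset.sum_singleton, Finset.sum_singleton]
      exact htel m₀ hm
    | succ k hmk ih =>
      rw [Finset.sum_Icc_succ_top (by omega), Finset.sum_Icc_succ_top (by omega : m₀ ≤ k+1)]
      have h := htel (k+1) (by omega)
      have heq : (a m₀ - a (k+1))/(2*β) + (a (k+1) - a (k+1+1))/(2*β)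
          = (a m₀ - a (k+1+1))/(2*β) := by ring
      linarith
  -- near-monotonicity of δ
  have hnearmono : ∀ j, 1 ≤ j → ∀ k, j ≤ k →
      δ (k+1) ≤ δ (j+1) + ∑ i ∈ Finset.Icc (j+1) k, η i := by
    intro j hj k hjk
    induction k, hjk using Nat.le_induction with
    | base =>
      rw [Finset.Icc_eq_empty (by omega), Finset.sum_empty]
      linarith
    | succ k hjk ih =>
      rw [Finset.sum_Icc_succ_top (by omega)]
      have h := hmono (k+1) (by omega)
      linarith
  -- the O(1/k) rate for δ(k+1)
  obtain ⟨R2, hR2def⟩ : ∃ r : ℝ, r = a 1 + 4*β*σ := ⟨_, rfl⟩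
  have hR2 : ∀ k, 1 ≤ k → a k ≤ R2 := by
    intro k hk
    rw [hR2def]
    exact hR2' k hk
  have hR2nn : 0 ≤ R2 := by
    rw [hR2def]
    have := hann 1
    nlinarith [mul_pos hβ hσ]
  obtain ⟨C, hCdef⟩ : ∃ r : ℝ, r = 12*σ + R2/β := ⟨_, rfl⟩
  have hCpos : 0 < C := by
    have h1 : 0 ≤ R2/β := div_nonneg hR2nn hβ.le
    rw [hCdef]
    linarith
  have hrate : ∀ k, 1 ≤ k → δ (k+1) ≤ C/(k:ℝ) := by
    intro k hk
    set m₀ : ℕ := (k+1)/2 with hm₀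
    have hm1 : 1 ≤ m₀ := by omega
    have hmk : m₀ ≤ k := by omega
    set Nn : ℕ := k - m₀ + 1 with hNn
    have hkr : (1:ℝ) ≤ (k:ℝ) := by exact_mod_cast hk
    have hkp : (0:ℝ) < (k:ℝ) := by linarith
    have hmr : (1:ℝ) ≤ (m₀:ℝ) := by exact_mod_cast hm1
    have hmp : (0:ℝ) < (m₀:ℝ) := by linarith
    have h2m : (k:ℝ) ≤ 2*(m₀:ℝ) := by exact_mod_cast (by omega : k ≤ 2*m₀)
    have h2N : (k:ℝ) ≤ 2*(Nn:ℝ) := by exact_mod_cast (by omega : k ≤ 2*Nn)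
    have hNk : (Nn:ℝ) ≤ (k:ℝ) := by exact_mod_cast (by omega : Nn ≤ k)
    have hNp : (0:ℝ) < (Nn:ℝ) := by linarith
    -- per-term bound
    have hper : ∀ j ∈ Finset.Icc m₀ k, δ (k+1) ≤ δ (j+1) + 2*σ/(m₀:ℝ) := by
      intro j hj
      obtain ⟨hj1, hj2⟩ := Finset.mem_Icc.mp hj
      have h1 := hnearmono j (by omega) k hj2
      have h2 := hηIcc (j+1) k (by omega)
      have h3 : 2*σ/((j+1:ℕ):ℝ) ≤ 2*σ/(m₀:ℝ) := by
        apply div_le_div_of_nonneg_left (by positivity) hmp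
        exact_mod_cast (by omega : m₀ ≤ j+1)
      linarith
    -- sum the per-term bound
    have hcard : (Finset.Icc m₀ k).card = Nn := by
      rw [Nat.card_Icc]; omega
    have hS1 : (Nn:ℝ) * δ (k+1) ≤ (∑ j ∈ Finset.Icc m₀ k, δ (j+1)) + (Nn:ℝ) * (2*σ/(m₀:ℝ)) := by
      have h := Finset.sum_le_sum hper
      rw [Finset.sum_const, hcard, nsmul_eq_mul] at h
      rw [Finset.sum_add_distrib, Finset.sum_const, hcard, nsmul_eq_mul] at h
      exact h
    have hS2 := hsum m₀ hm1 k hmk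
    have hS3 := hηIcc m₀ k hm1
    have hS4 : (a m₀ - a (k+1))/(2*β) ≤ R2/(2*β) := by
      apply (div_le_div_iff_of_pos_right (by positivity : (0:ℝ) < 2*β)).mpr
      have h1 := hann (k+1)
      have h2 := hR2 m₀ hm1
      linarith
    set q : ℝ := 2*σ/(m₀:ℝ) with hqdef
    have hqnn : 0 ≤ q := by positivity
    have hqmr : q * (m₀:ℝ) = 2*σ := div_mul_cancel₀ _ (ne_of_gt hmp)
    have hq2 : q ≤ 2*σ := by nlinarith [mul_le_mul_of_nonneg_left hmr hqnn]
    set P : ℝ := (Nn:ℝ) * q with hPdef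
    have hPnn : 0 ≤ P := mul_nonneg hNp.le hqnn
    have hPm : P * (m₀:ℝ) = 2*σ*(Nn:ℝ) := by rw [hPdef, mul_assoc, hqmr]; ring
    have hPkr2 : P*((k:ℝ)/2) ≤ P*(m₀:ℝ) := mul_le_mul_of_nonneg_left (by linarith) hPnn
    have h2σN : 2*σ*(Nn:ℝ) ≤ 2*σ*(k:ℝ) := mul_le_mul_of_nonneg_left hNk (by positivity)
    have hP4 : P ≤ 4*σ := by
      apply le_of_mul_le_mul_right _ hkp
      nlinarith
    rw [le_div_iff₀ hkp]
    have hδk1 := hδnn (k+1)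
    have hδ2N : δ (k+1)*(k:ℝ) ≤ δ (k+1)*(2*(Nn:ℝ)) := mul_le_mul_of_nonneg_left h2N hδk1
    have hRb : R2/β = 2*(R2/(2*β)) := by ring
    have hNδ : (Nn:ℝ) * δ (k+1) ≤ q + R2/(2*β) + P := by linarith
    rw [hCdef]
    linarith [hδ2N, hNδ, hq2, hP4, hRb]
  -- rate for δ k itself
  obtain ⟨C₁, hC₁def⟩ : ∃ r : ℝ, r = 2*C + δ 1 + 1 := ⟨_, rfl⟩
  have hC₁pos : 0 < C₁ := by rw [hC₁def]; linarith [hδnn 1]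
  have hδrate : ∀ k, 1 ≤ k → δ k ≤ C₁/(k:ℝ) := by
    intro k hk
    rcases eq_or_lt_of_le hk with rfl | h2
    · norm_num
      rw [hC₁def]
      linarith [hδnn 1]
    · obtain ⟨j, rfl⟩ : ∃ j, k = j + 1 := ⟨k-1, by omega⟩
      have hj : 1 ≤ j := by omega
      have h := hrate j hj
      have hjr : (1:ℝ) ≤ (j:ℝ) := by exact_mod_cast hj
      have hjp : (0:ℝ) < (j:ℝ) := by linarith
      have hkp : (0:ℝ) < ((j:ℝ)+1) := by linarith
      have hc1 : C/(j:ℝ) ≤ (2*C)/((j:ℝ)+1) := by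
        rw [div_le_div_iff₀ hjp hkp]
        nlinarith
      have hc2 : (2*C)/((j:ℝ)+1) ≤ C₁/((j:ℝ)+1) := by
        apply (div_le_div_iff_of_pos_right hkp).mpr
        rw [hC₁def]
        linarith [hδnn 1]
      push_cast
      linarith
  -- rate for feasibility
  obtain ⟨C₂, hC₂def⟩ : ∃ r : ℝ, r = 2*(C₁ + σ)/β := ⟨_, rfl⟩
  have hC₂pos : 0 < C₂ := by
    rw [hC₂def]
    exact div_pos (by linarith) hβ
  have hfeasrate : ∀ k, 1 ≤ k → ‖A (x (k+1)) - b‖^2 ≤ C₂/(k:ℝ) := by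
    intro k hk
    have hkr : (1:ℝ) ≤ (k:ℝ) := by exact_mod_cast hk
    have hkp : (0:ℝ) < (k:ℝ) := by linarith
    have h1 := hδrec k hk
    have h2 := hδnn (k+1)
    have h3 := hδrate k hk
    have h4 : η k ≤ σ/(k:ℝ) := by
      rw [hη k hk]
      apply div_le_div_of_nonneg_left hσ.le hkp
      nlinarith
    have h5 : β/2 * ‖A (x (k+1)) - b‖^2 ≤ (C₁ + σ)/(k:ℝ) := by
      have e : C₁/(k:ℝ) + σ/(k:ℝ) = (C₁+σ)/(k:ℝ) := by ring
      linarith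
    have h6 : (2/β) * (β/2 * ‖A (x (k+1)) - b‖^2) = ‖A (x (k+1)) - b‖^2 := by
      field_simp
    have h7 : (2/β) * ((C₁+σ)/(k:ℝ)) = C₂/(k:ℝ) := by rw [hC₂def]; ring
    have h8 := mul_le_mul_of_nonneg_left h5 (by positivity : (0:ℝ) ≤ 2/β)
    linarith
  -- rate for the objective gap
  obtain ⟨Λ, hΛdef⟩ : ∃ r : ℝ, r = ‖lamstar‖ + Real.sqrt R2 := ⟨_, rfl⟩
  have hΛnn : 0 ≤ Λ := by rw [hΛdef]; positivity
  obtain ⟨C₃, hC₃def⟩ : ∃ r : ℝ, r = σ + (Λ + ‖lamstar‖)*Real.sqrt C₂ + β*C₂/2 + 1 := ⟨_, rfl⟩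
  have hC₃pos : 0 < C₃ := by
    rw [hC₃def]
    have h1 : 0 ≤ (Λ + ‖lamstar‖)*Real.sqrt C₂ :=
      mul_nonneg (add_nonneg hΛnn (norm_nonneg _)) (Real.sqrt_nonneg _)
    have h2 : 0 ≤ β*C₂/2 := by nlinarith [mul_pos hβ hC₂pos]
    linarith
  have hgap : ∀ k, 1 ≤ k → |F (x (k+1)) - F xstar| ≤ C₃/Real.sqrt (k:ℝ) := by
    intro k hk
    have hkr : (1:ℝ) ≤ (k:ℝ) := by exact_mod_cast hk
    have hkp : (0:ℝ) < (k:ℝ) := by linarith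
    obtain ⟨s, hs⟩ : ∃ r : ℝ, r = Real.sqrt (k:ℝ) := ⟨_, rfl⟩
    rw [← hs]
    have hs1 : 1 ≤ s := by rw [hs]; exact Real.one_le_sqrt.mpr hkr
    have hsp : 0 < s := by linarith
    have hsk : s ≤ (k:ℝ) := by
      rw [hs]
      exact (Real.sqrt_le_left hkp.le).mpr (by nlinarith)
    have hv2 : ‖A (x (k+1)) - b‖^2 ≤ C₂/(k:ℝ) := hfeasrate k hk
    have hvn : ‖A (x (k+1)) - b‖ ≤ Real.sqrt C₂ / s := by
      have h1 : ‖A (x (k+1)) - b‖ = Real.sqrt (‖A (x (k+1)) - b‖^2) :=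
        (Real.sqrt_sq (norm_nonneg _)).symm
      rw [h1, hs, ← Real.sqrt_div hC₂pos.le]
      exact Real.sqrt_le_sqrt hv2
    have halam : ‖lamstar - lam (k+1)‖ ≤ Real.sqrt R2 := by
      have h1 : a (k+1) ≤ R2 := hR2 (k+1) (by omega)
      have h1' : ‖lamstar - lam (k+1)‖^2 ≤ R2 := h1
      exact (Real.le_sqrt (norm_nonneg _) hR2nn).mpr h1'
    have hlamb : ‖lam (k+1)‖ ≤ Λ := by
      have h1 := norm_sub_norm_le (lam (k+1)) lamstar
      rw [norm_sub_rev] at h1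
      rw [hΛdef]
      linarith
    have hub : F (x (k+1)) - F xstar ≤ η k - ⟪lam (k+1), A (x (k+1)) - b⟫ := by
      have h := hsub k hk xstar
      rw [hfeas, sub_self, inner_zero_right, ← hF xstar] at h
      linarith
    have hlb : F xstar - F (x (k+1))
        ≤ ⟪lamstar, A (x (k+1)) - b⟫ + β/2*‖A (x (k+1)) - b‖^2 := by
      have h := hup k lamstar
      rw [hsd] at h
      linarith
    have hcs : |⟪lam (k+1), A (x (k+1)) - b⟫| ≤ ‖lam (k+1)‖ * ‖A (x (k+1)) - b‖ :=
      abs_real_inner_le_norm _ _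
    have hcs2 : |⟪lamstar, A (x (k+1)) - b⟫| ≤ ‖lamstar‖ * ‖A (x (k+1)) - b‖ :=
      abs_real_inner_le_norm _ _
    have hprod1 : ‖lam (k+1)‖ * ‖A (x (k+1)) - b‖ ≤ Λ * (Real.sqrt C₂ / s) :=
      mul_le_mul hlamb hvn (norm_nonneg _) hΛnn
    have hprod2 : ‖lamstar‖ * ‖A (x (k+1)) - b‖ ≤ ‖lamstar‖ * (Real.sqrt C₂ / s) :=
      mul_le_mul_of_nonneg_left hvn (norm_nonneg _)
    have hη2 : η k ≤ σ/s := by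
      rw [hη k hk]
      apply div_le_div_of_nonneg_left hσ.le hsp
      nlinarith
    have hv2s : β/2*‖A (x (k+1)) - b‖^2 ≤ (β*C₂/2)/s := by
      have h1 : β/2*‖A (x (k+1)) - b‖^2 ≤ β/2*(C₂/(k:ℝ)) :=
        mul_le_mul_of_nonneg_left hv2 (by positivity)
      have h2 : β/2*(C₂/(k:ℝ)) ≤ β/2*(C₂/s) := by
        apply mul_le_mul_of_nonneg_left _ (by positivity)
        exact div_le_div_of_nonneg_left hC₂pos.le hsp hsk
      have h3 : β/2*(C₂/s) = (β*C₂/2)/s := by ring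
      linarith
    have hsqnn : 0 ≤ Real.sqrt C₂ := Real.sqrt_nonneg _
    rw [abs_le]
    constructor
    · have hC3b : ‖lamstar‖*(Real.sqrt C₂/s) + (β*C₂/2)/s ≤ C₃/s := by
        have e : ‖lamstar‖*(Real.sqrt C₂/s) = (‖lamstar‖*Real.sqrt C₂)/s := by ring
        rw [e, ← add_div]
        apply (div_le_div_iff_of_pos_right hsp).mpr
        rw [hC₃def]
        nlinarith [mul_nonneg hΛnn hsqnn]
      have h1 := le_abs_self (⟪lamstar, A (x (k+1)) - b⟫ : ℝ)
      linarith
    · have hC3a : σ/s + Λ*(Real.sqrt C₂/s) ≤ C₃/s := by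
        have e : Λ*(Real.sqrt C₂/s) = (Λ*Real.sqrt C₂)/s := by ring
        rw [e, ← add_div]
        apply (div_le_div_iff_of_pos_right hsp).mpr
        rw [hC₃def]
        nlinarith [mul_nonneg (norm_nonneg lamstar) hsqnn]
      have h1 := neg_abs_le (⟪lam (k+1), A (x (k+1)) - b⟫ : ℝ)
      linarith
  exact ⟨C₁, C₂, C₃, hC₁pos, hC₂pos, hC₃pos, fun k hk =>
    ⟨hδrate k hk, hfeasrate k hk, hgap k hk⟩⟩
end

section
/- (Lemma 3, boundedness of dual iterates) Suppose the nonnegative tolerance sequence {η_k} is summable. Then for every k ≥ 1: ‖λ^k − λ*‖ ≤ B, where B := √(‖λ¹ − λ*‖² + 2β Σ_{k=1}^∞ η_k). -/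
open RealInnerProductSpace Filter

/-- Gradient inequality for convex functions: `f x + ⟪∇f x, y - x⟫ ≤ f y`. -/
lemma convex_grad_ineq {n : ℕ} {f : EuclideanSpace ℝ (Fin n) → ℝ}
    (hf : ConvexOn ℝ Set.univ f) {x y fx : EuclideanSpace ℝ (Fin n)}
    (h : HasGradientAt f fx x) : f x + ⟪fx, y - x⟫ ≤ f y := by
  rcases eq_or_ne y x with rfl | hxy
  · simp
  set φ : ℝ → ℝ := fun t => f (AffineMap.lineMap x y t) with hφ
  have hconv : ConvexOn ℝ Set.univ φ := by
    have := hf.comp_affineMap (AffineMap.lineMap (k := ℝ) x y)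
    simpa [Set.preimage_univ, Function.comp_def] using this
  have hc : HasDerivAt (fun t : ℝ => AffineMap.lineMap x y t) (y - x) 0 := by
    simp only [AffineMap.lineMap_apply, vsub_eq_sub, vadd_eq_add]
    simpa using ((hasDerivAt_id (0 : ℝ)).smul_const (y - x)).add_const x
  have hc0 : (AffineMap.lineMap x y : ℝ → EuclideanSpace ℝ (Fin n)) 0 = x := by
    simp
  have hderiv : HasDerivAt φ ⟪fx, y - x⟫ 0 := by
    have hF : HasFDerivAt f (InnerProductSpace.toDual ℝ _ fx : _ →L[ℝ] ℝ) x := h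
    rw [← hc0] at hF
    have := hF.comp_hasDerivAt (x := (0 : ℝ)) hc
    simpa [φ, Function.comp_def, InnerProductSpace.toDual_apply_apply] using this
  have hφ0 : φ 0 = f x := by simp [φ]
  have hφ1 : φ 1 = f y := by simp [φ]
  have hslope := hconv.le_slope_of_hasDerivAt (Set.mem_univ (0 : ℝ))
    (Set.mem_univ (1 : ℝ)) one_pos hderiv
  rw [slope_def_field] at hslope
  simp only [hφ0, hφ1, sub_zero, div_one] at hslope
  linarith

/-- **Lemma 3 (boundedness of dual iterates).**
If the nonnegative tolerance sequence `{η_k}` is summable, then for every `k ≥ 1`: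
`‖λ^k − λ*‖ ≤ B`, where `B := √(‖λ¹ − λ*‖² + 2β Σ_{k=1}^∞ η_k)`. -/
theorem ial_dual_iterates_bounded
    {n m : ℕ}
    (A : EuclideanSpace ℝ (Fin n) →L[ℝ] EuclideanSpace ℝ (Fin m))
    (b : EuclideanSpace ℝ (Fin m))
    (f g : EuclideanSpace ℝ (Fin n) → ℝ)
    (f' : EuclideanSpace ℝ (Fin n) → EuclideanSpace ℝ (Fin n))
    (hf : ConvexOn ℝ Set.univ f)
    (hf' : ∀ x, HasGradientAt f (f' x) x)
    (hg : ConvexOn ℝ Set.univ g)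
    (β : ℝ) (hβ : 0 < β)
    (L : EuclideanSpace ℝ (Fin n) → EuclideanSpace ℝ (Fin m) → ℝ)
    (hL : ∀ x lam, L x lam
        = f x + ⟪lam, A x - b⟫ + β / 2 * ‖A x - b‖ ^ 2 + g x)
    (d : EuclideanSpace ℝ (Fin m) → ℝ)
    (hd : ∀ lam, IsLeast (Set.range fun x => L x lam) (d lam))
    (x : ℕ → EuclideanSpace ℝ (Fin n))
    (lam : ℕ → EuclideanSpace ℝ (Fin m))
    (η : ℕ → ℝ)
    (hη : ∀ k, 1 ≤ k → 0 ≤ η k)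
    (happrox : ∀ k, 1 ≤ k → ∀ y,
        ⟪f' (x (k + 1)) + A.adjoint (lam k + β • (A (x (k + 1)) - b)), x (k + 1) - y⟫
          + g (x (k + 1)) - g y ≤ η k)
    (hlam : ∀ k, 1 ≤ k → lam (k + 1) = lam k + β • (A (x (k + 1)) - b))
    (lamstar : EuclideanSpace ℝ (Fin m))
    (hstar : ∀ μ, d μ ≤ d lamstar)
    (hsum : Summable fun k : ℕ => η (k + 1))
    (B : ℝ)
    (hB : B = Real.sqrt (‖lam 1 - lamstar‖ ^ 2 + 2 * β * ∑' k : ℕ, η (k + 1))) :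
    ∀ k, 1 ≤ k → ‖lam k - lamstar‖ ≤ B := by
  -- key one-step estimate
  have key : ∀ k, 1 ≤ k →
      ‖lam (k + 1) - lamstar‖ ^ 2 ≤ ‖lam k - lamstar‖ ^ 2 + 2 * β * η k := by
    intro k hk
    set xp := x (k + 1) with hxp
    set r := A xp - b with hr
    set μ := lam k + β • r with hμ
    -- step 1: for all y
    have step1 : ∀ y, f xp + g xp + ⟪μ, r⟫ - η k ≤ f y + g y + ⟪μ, A y - b⟫ := by
      intro y
      have happ := happrox k hk y
      have hgrad := convex_grad_ineq hf (y := y) (hf' xp)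
      have hin : ⟪f' xp, xp - y⟫ = -⟪f' xp, y - xp⟫ := by
        rw [← inner_neg_right, neg_sub]
      have hadj : ⟪A.adjoint μ, xp - y⟫ = ⟪μ, r⟫ - ⟪μ, A y - b⟫ := by
        rw [ContinuousLinearMap.adjoint_inner_left, map_sub]
        rw [show A xp - A y = (A xp - b) - (A y - b) by abel]
        rw [inner_sub_right]
      rw [inner_add_left, hadj, hin] at happ
      linarith
    -- step 2: lower bound on d μ
    have hdμ : f xp + g xp + ⟪μ, r⟫ - η k ≤ d μ := by
      obtain ⟨x0, hx0⟩ := (hd μ).1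
      calc f xp + g xp + ⟪μ, r⟫ - η k ≤ f x0 + g x0 + ⟪μ, A x0 - b⟫ := step1 x0
        _ ≤ L x0 μ := by
            rw [hL]
            nlinarith [sq_nonneg ‖A x0 - b‖, hβ.le]
        _ = d μ := hx0
    have hdstar : d lamstar ≤ L xp lamstar := (hd lamstar).2 ⟨xp, rfl⟩
    have hLxp : L xp lamstar = f xp + ⟪lamstar, r⟫ + β / 2 * ‖r‖ ^ 2 + g xp := hL xp lamstar
    -- combine: ⟪μ - lamstar, r⟫ ≤ β/2 ‖r‖² + η k
    have hcomb : ⟪μ, r⟫ - ⟪lamstar, r⟫ ≤ β / 2 * ‖r‖ ^ 2 + η k := by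
      have := hstar μ
      linarith [hdμ, hdstar, hLxp.le, hLxp.ge]
    have hμr : ⟪μ, r⟫ = ⟪lam k, r⟫ + β * ‖r‖ ^ 2 := by
      rw [hμ, inner_add_left, real_inner_smul_left, real_inner_self_eq_norm_sq]
    have hkey2 : ⟪lam k - lamstar, r⟫ + β / 2 * ‖r‖ ^ 2 ≤ η k := by
      rw [inner_sub_left]
      rw [hμr] at hcomb
      linarith
    -- expand the norm
    have hexp : lam (k + 1) - lamstar = (lam k - lamstar) + β • r := by
      rw [hlam k hk]; abel
    rw [hexp, norm_add_sq_real, real_inner_smul_right, norm_smul,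
      Real.norm_eq_abs, abs_of_pos hβ]
    nlinarith [hkey2, hβ.le, sq_nonneg ‖r‖]
  -- induction: partial sums bound
  have hmain : ∀ j : ℕ, ‖lam (j + 1) - lamstar‖ ^ 2
      ≤ ‖lam 1 - lamstar‖ ^ 2 + 2 * β * ∑ i ∈ Finset.range j, η (i + 1) := by
    intro j
    induction j with
    | zero => simp
    | succ j ih =>
      have hk := key (j + 1) (by omega)
      rw [Finset.sum_range_succ]
      linarith
  intro k hk
  obtain ⟨j, rfl⟩ : ∃ j, k = j + 1 := ⟨k - 1, by omega⟩
  have hsumle : ∑ i ∈ Finset.range j, η (i + 1) ≤ ∑' i : ℕ, η (i + 1) :=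
    Summable.sum_le_tsum (Finset.range j) (fun i _ => hη (i + 1) (by omega)) hsum
  have h1 : ‖lam (j + 1) - lamstar‖ ^ 2 ≤ ‖lam 1 - lamstar‖ ^ 2 + 2 * β * ∑' i : ℕ, η (i + 1) := by
    have := hmain j
    nlinarith [hβ.le]
  calc ‖lam (j + 1) - lamstar‖ = Real.sqrt (‖lam (j + 1) - lamstar‖ ^ 2) := by
        rw [Real.sqrt_sq (norm_nonneg _)]
    _ ≤ B := by rw [hB]; exact Real.sqrt_le_sqrt h1
end
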